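/- The number of non-trivial compositions of order k of differential operations from the set {dir_e, grad, curl, div} in R^3 equals F_{k+3} + 1, where F_k denotes the k-th Fibonacci number (F_1 = F_2 = 1). -/

import Mathlib

/-- The relation σ on indices of the operations ∇₀ = dir_e, ∇₁ = grad, ∇₂ = curl,
∇₃ = div in ℝ³: `sigma3 i j` holds iff the composition ∇ⱼ ∘ ∇ᵢ is non-trivial. -/
def sigma3 (i j : Fin 4) : Prop :=
  (i, j) ∈ [((0 : Fin 4), (0 : Fin 4)), (0, 1), (1, 3), (2, 2), (3, 0), (3, 1)]

instance : DecidableRel sigma3 := fun i j => by unfold sigma3; infer_instance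

namespace Aux

instance finLists (n : ℕ) (P : List (Fin 4) → Prop) :
    Finite {l : List (Fin 4) // l.length = n ∧ P l} := by
  apply Finite.of_injective
    (fun x : {l : List (Fin 4) // l.length = n ∧ P l} =>
      (fun i : Fin n => x.1.get ⟨i.1, by have := i.isLt; omega⟩))
  intro x y h
  apply Subtype.ext
  apply List.ext_get (by rw [x.2.1, y.2.1])
  intro i h1 h2
  have hx := x.2.1
  have := congrFun h ⟨i, by omega⟩
  simpa using this

lemma natCard_sigma {ι : Type*} [Fintype ι] (F : ι → Type*) [∀ i, Finite (F i)] :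
    Nat.card (Σ i, F i) = ∑ i, Nat.card (F i) := by
  classical
  letI := fun i => Fintype.ofFinite (F i)
  simp [Nat.card_eq_fintype_card, Fintype.card_sigma]

/-- number of good words of length `n+1` starting with `a`, parametrized by the tail. -/
noncomputable def c (n : ℕ) (a : Fin 4) : ℕ :=
  Nat.card {l : List (Fin 4) // l.length = n ∧ (a :: l).Chain' sigma3}

lemma c_zero (a : Fin 4) : c 0 a = 1 := by
  rw [c, Nat.card_eq_one_iff_unique]
  constructor
  · constructor
    rintro ⟨l1, hl1, _⟩ ⟨l2, hl2, _⟩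
    apply Subtype.ext
    simp [List.length_eq_zero_iff.mp hl1, List.length_eq_zero_iff.mp hl2]
  · exact ⟨⟨[], rfl, List.isChain_singleton a⟩⟩

def stepEquiv (n : ℕ) (a : Fin 4) :
    {l : List (Fin 4) // l.length = n + 1 ∧ (a :: l).Chain' sigma3} ≃
      Σ b : Fin 4, {l : List (Fin 4) // l.length = n ∧ (b :: l).Chain' sigma3 ∧ sigma3 a b} where
  toFun := fun x => match x with
    | ⟨[], h⟩ => absurd h.1 (by simp)
    | ⟨b :: l, h⟩ => ⟨b, l, by simpa using h.1,
        (List.isChain_cons_cons.mp h.2).2, (List.isChain_cons_cons.mp h.2).1⟩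
  invFun := fun ⟨b, l, h1, h2, h3⟩ => ⟨b :: l, by simp [h1], List.isChain_cons_cons.mpr ⟨h3, h2⟩⟩
  left_inv := by
    rintro ⟨(_ | ⟨b, l⟩), h⟩
    · exact absurd h.1 (by simp)
    · rfl
  right_inv := by rintro ⟨b, l, h1, h2, h3⟩; rfl

lemma card_true (n : ℕ) (a b : Fin 4) (hab : sigma3 a b) :
    Nat.card {l : List (Fin 4) // l.length = n ∧ (b :: l).Chain' sigma3 ∧ sigma3 a b} = c n b := by
  rw [c]
  exact Nat.card_congr (Equiv.subtypeEquivRight (fun l => by tauto))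

lemma card_false (n : ℕ) (a b : Fin 4) (hab : ¬ sigma3 a b) :
    Nat.card {l : List (Fin 4) // l.length = n ∧ (b :: l).Chain' sigma3 ∧ sigma3 a b} = 0 := by
  have : IsEmpty {l : List (Fin 4) // l.length = n ∧ (b :: l).Chain' sigma3 ∧ sigma3 a b} :=
    ⟨fun x => hab x.2.2.2⟩
  exact Nat.card_of_isEmpty

lemma c_succ (n : ℕ) (a : Fin 4) :
    c (n + 1) a = ∑ b : Fin 4,
      Nat.card {l : List (Fin 4) // l.length = n ∧ (b :: l).Chain' sigma3 ∧ sigma3 a b} := by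
  rw [c, Nat.card_congr (stepEquiv n a), natCard_sigma]

lemma c_vals (n : ℕ) :
    c n 0 = Nat.fib (n + 2) ∧ c n 1 = Nat.fib (n + 1) ∧ c n 2 = 1 ∧ c n 3 = Nat.fib (n + 2) := by
  induction n with
  | zero => simp [c_zero]
  | succ n ih =>
    obtain ⟨h0, h1, h2, h3⟩ := ih
    have hfib : Nat.fib (n + 1 + 2) = Nat.fib (n + 1) + Nat.fib (n + 2) := Nat.fib_add_two
    have hfib2 : Nat.fib (n + 1 + 1) = Nat.fib (n + 2) := rfl
    refine ⟨?_, ?_, ?_, ?_⟩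
    · rw [c_succ, Fin.sum_univ_four, card_true _ _ _ (by decide),
        card_true _ _ _ (by decide), card_false _ _ _ (by decide),
        card_false _ _ _ (by decide), h0, h1]
      omega
    · rw [c_succ, Fin.sum_univ_four, card_false _ _ _ (by decide),
        card_false _ _ _ (by decide), card_false _ _ _ (by decide),
        card_true _ _ _ (by decide), h3]
      omega
    · rw [c_succ, Fin.sum_univ_four, card_false _ _ _ (by decide),
        card_false _ _ _ (by decide), card_true _ _ _ (by decide),
        card_false _ _ _ (by decide), h2]
    · rw [c_succ, Fin.sum_univ_four, card_true _ _ _ (by decide),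
        card_true _ _ _ (by decide), card_false _ _ _ (by decide),
        card_false _ _ _ (by decide), h0, h1]
      omega

def headEquiv (n : ℕ) :
    {l : List (Fin 4) // l.length = n + 1 ∧ l.Chain' sigma3} ≃
      Σ a : Fin 4, {l : List (Fin 4) // l.length = n ∧ (a :: l).Chain' sigma3} where
  toFun := fun x => match x with
    | ⟨[], h⟩ => absurd h.1 (by simp)
    | ⟨a :: l, h⟩ => ⟨a, l, by simpa using h.1, h.2⟩
  invFun := fun ⟨a, l, h1, h2⟩ => ⟨a :: l, by simp [h1], h2⟩
  left_inv := by
    rintro ⟨(_ | ⟨a, l⟩), h⟩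
    · exact absurd h.1 (by simp)
    · rfl
  right_inv := by rintro ⟨a, l, h1, h2⟩; rfl

lemma total (n : ℕ) :
    Nat.card {l : List (Fin 4) // l.length = n + 1 ∧ l.Chain' sigma3} =
      Nat.fib (n + 4) + 1 := by
  rw [Nat.card_congr (headEquiv n), natCard_sigma, Fin.sum_univ_four]
  show c n 0 + c n 1 + c n 2 + c n 3 = _
  obtain ⟨h0, h1, h2, h3⟩ := c_vals n
  have e4 : Nat.fib (n + 4) = Nat.fib (n + 2) + Nat.fib (n + 3) := Nat.fib_add_two
  have e3 : Nat.fib (n + 3) = Nat.fib (n + 1) + Nat.fib (n + 2) := Nat.fib_add_two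
  omega

def funEquiv (k : ℕ) :
    {w : Fin k → Fin 4 //
      ∀ i : Fin k, ∀ h : (i : ℕ) + 1 < k, sigma3 (w i) (w ⟨(i : ℕ) + 1, h⟩)} ≃
      {l : List (Fin 4) // l.length = k ∧ l.Chain' sigma3} where
  toFun x := ⟨List.ofFn x.1, by simp, by
    rw [List.Chain', List.isChain_iff_getElem]
    intro i hi
    have hlen : (List.ofFn x.1).length = k := by simp
    simp only [List.getElem_ofFn]
    exact x.2 ⟨i, by omega⟩ (show i + 1 < k by omega)⟩
  invFun x := ⟨fun i => x.1.get ⟨i.1, by have := x.2.1; omega⟩, by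
    intro i h
    have hx := x.2.1
    exact List.isChain_iff_getElem.mp x.2.2 i.1 (by omega)⟩
  left_inv := by
    intro x
    apply Subtype.ext
    funext i
    simp [List.get_ofFn]
  right_inv := by
    intro x
    apply Subtype.ext
    apply List.ext_get (by simp [x.2.1])
    intro i h1 h2
    simp [List.get_ofFn]

end Aux

/-- The number of non-trivial compositions of order `k` of differential operations
from {dir_e, grad, curl, div} in ℝ³ (modeled as words `i₁ … i_k` over `Fin 4`
with `sigma3 (i_j) (i_{j+1})` for all consecutive pairs) equals `F_{k+3} + 1`. -/
theorem stmt0 (k : ℕ) (hk : 1 ≤ k) :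
    Nat.card {w : Fin k → Fin 4 //
      ∀ i : Fin k, ∀ h : (i : ℕ) + 1 < k, sigma3 (w i) (w ⟨(i : ℕ) + 1, h⟩)} =
    Nat.fib (k + 3) + 1 := by
  obtain ⟨n, rfl⟩ : ∃ n, k = n + 1 := ⟨k - 1, by omega⟩
  rw [Nat.card_congr (Aux.funEquiv (n + 1)), Aux.total n]
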